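/- Let V be a finite set, let T be a spanning tree on V (a simple graph on vertex set V that is connected and acyclic), and let ŵ : V → V → ℝ be such that for every pair x, y adjacent in T, 0 < ŵ x y < 1 and ŵ x y + ŵ y x = 1. Then there exists a stochastic tournament p on V such that p x y = ŵ x y for every pair x, y adjacent in T, and p is reversible: there exists π : V → ℝ with π x > 0 for all x, ∑_{x ∈ V} π x = 1, and π x * p x y = π y * p y x for all distinct x, y in V. -/

import Mathlib

private noncomputable def treeWt {V : Type*} {T : SimpleGraph V} (w : V → V → ℝ)
    {a b : V} (W : T.Walk a b) : ℝ :=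
  (W.darts.map fun d => w d.toProd.2 d.toProd.1 / w d.toProd.1 d.toProd.2).prod

private lemma treeWt_nil {V : Type*} {T : SimpleGraph V} (w : V → V → ℝ) {a : V} :
    treeWt w (SimpleGraph.Walk.nil : T.Walk a a) = 1 := by
  simp [treeWt]

private lemma treeWt_append {V : Type*} {T : SimpleGraph V} (w : V → V → ℝ)
    {a b c : V} (p : T.Walk a b) (q : T.Walk b c) :
    treeWt w (p.append q) = treeWt w p * treeWt w q := by
  simp [treeWt, SimpleGraph.Walk.darts_append]

private lemma treeWt_cons {V : Type*} {T : SimpleGraph V} (w : V → V → ℝ)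
    {a b c : V} (h : T.Adj a b) (p : T.Walk b c) :
    treeWt w (SimpleGraph.Walk.cons h p) = (w b a / w a b) * treeWt w p := by
  simp [treeWt]

private lemma treeWt_pos {V : Type*} {T : SimpleGraph V} {w : V → V → ℝ}
    (hw : ∀ x y, T.Adj x y → 0 < w x y) {a b : V} (p : T.Walk a b) :
    0 < treeWt w p := by
  apply List.prod_pos
  intro x hx
  simp only [List.mem_map] at hx
  obtain ⟨d, hd, rfl⟩ := hx
  exact div_pos (hw _ _ d.adj.symm) (hw _ _ d.adj)

/-- Any weighting of the edges of a spanning tree extends to a reversible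
stochastic tournament on the whole vertex set. -/
theorem spanning_tree_weights_extend_reversible {V : Type*} [Fintype V]
    (T : SimpleGraph V) (hT : T.IsTree)
    (w : V → V → ℝ)
    (hw : ∀ x y : V, T.Adj x y → 0 < w x y ∧ w x y < 1 ∧ w x y + w y x = 1) :
    ∃ p : V → V → ℝ,
      (∀ x y : V, x ≠ y → 0 < p x y ∧ p x y < 1 ∧ p x y + p y x = 1) ∧
      (∀ x y : V, T.Adj x y → p x y = w x y) ∧
      (∃ π : V → ℝ, (∀ x, 0 < π x) ∧ (∑ x, π x) = 1 ∧
        ∀ x y : V, x ≠ y → π x * p x y = π y * p y x) := by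
  classical
  have hpos : ∀ x y, T.Adj x y → 0 < w x y := fun x y h => (hw x y h).1
  have hNE : Nonempty V := hT.isConnected.nonempty
  obtain ⟨r⟩ := id hNE
  choose P hP hPu using fun x => hT.existsUnique_path x r
  set f : V → ℝ := fun x => treeWt w (P x) with hf
  have fpos : ∀ x, 0 < f x := fun x => treeWt_pos hpos _
  have key : ∀ x y, T.Adj x y → f x * w x y = f y * w y x := by
    intro x y hxy
    have hxypos := hpos x y hxy
    have hyxpos := hpos y x hxy.symm
    show treeWt w (P x) * w x y = treeWt w (P y) * w y x
    by_cases hy : y ∈ (P x).support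
    · have h1 : (P x).takeUntil y hy = SimpleGraph.Walk.cons hxy SimpleGraph.Walk.nil :=
        (hT.existsUnique_path x y).unique ((hP x).takeUntil hy)
          (SimpleGraph.Walk.IsPath.nil.cons (by simp [hxy.ne]))
      have h2 : (P x).dropUntil y hy = P y := hPu y _ ((hP x).dropUntil hy)
      have h3 := congrArg (treeWt w) ((P x).take_spec hy)
      rw [treeWt_append, h1, h2, treeWt_cons, treeWt_nil] at h3
      -- h3 : (w y x / w x y) * 1 * f y = f x
      rw [← h3]
      field_simp
    · have hcons : (SimpleGraph.Walk.cons hxy.symm (P x)).IsPath := (hP x).cons hy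
      have h1 : SimpleGraph.Walk.cons hxy.symm (P x) = P y := hPu y _ hcons
      have h3 := congrArg (treeWt w) h1
      rw [treeWt_cons] at h3
      -- h3 : (w x y / w y x) * f x = f y
      rw [← h3]
      field_simp
  set S := ∑ x, f x with hS
  haveI := hNE
  have hSpos : 0 < S := Finset.sum_pos (fun x _ => fpos x) Finset.univ_nonempty
  refine ⟨fun x y => f y / (f x + f y), ?_, ?_, ⟨fun x => f x / S, ?_, ?_, ?_⟩⟩
  · intro x y _
    have h1 : 0 < f x + f y := add_pos (fpos x) (fpos y)
    have h2 : 0 < f y + f x := add_pos (fpos y) (fpos x)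
    refine ⟨div_pos (fpos y) h1, (div_lt_one h1).2 (by linarith [fpos x]), ?_⟩
    show f y / (f x + f y) + f x / (f y + f x) = 1
    rw [add_comm (f y) (f x), ← add_div]
    rw [add_comm (f y) (f x), div_self h1.ne']
  · intro x y hxy
    have hsum := (hw x y hxy).2.2
    have h1 : 0 < f x + f y := add_pos (fpos x) (fpos y)
    show f y / (f x + f y) = w x y
    rw [div_eq_iff h1.ne']
    linear_combination -(key x y hxy) - f y * hsum
  · intro x
    exact div_pos (fpos x) hSpos
  · rw [← Finset.sum_div, div_self hSpos.ne']
  · intro x y _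
    have h1 : 0 < f x + f y := add_pos (fpos x) (fpos y)
    have h2 : 0 < f y + f x := add_pos (fpos y) (fpos x)
    show f x / S * (f y / (f x + f y)) = f y / S * (f x / (f y + f x))
    rw [add_comm (f y) (f x)]
    field_simp
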